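/- The concrete FACTS model built from attention routers is L.P.E. and R.P.I.: let k, m, d, d', t ∈ ℕ with d' > 0 and α ∈ ℝ. For each label L ∈ {Δ, B, U}, let g_φ^L : ℝ^d → ℝ^{d'}, g_ψ^L : ℝ^d → ℝ^{d'}, g_φ̃^L : ℝ^d → ℝ^d be arbitrary functions and let R_L(Z, X) = softmax(φ_L(Z) ψ_L(X)^T / √d') φ̃_L(X) be the associated attention router with row-wise maps and row-wise softmax. Define Δ(Z, X) = R_Δ(Z, X), Ā(Z, X) = exp(α Δ(Z, X)) with the exponential applied entrywise, B̄(Z, X) = Δ(Z, X) ⊙ R_B(Z, X), and U(Z, X) = R_U(Z, X). Given Z_0 ∈ ℝ^{k×d} and X_1, …, X_t ∈ ℝ^{m×d}, define Z_s = Ā(Z_0, X_s) ⊙ Z_{s-1} + B̄(Z_0, X_s) ⊙ U(Z_0, X_s) for s = 1, …, t. Then for every permutation matrix σ_Z ∈ S_k and all permutation matrices σ_X^1, …, σ_X^t ∈ S_m, running the same recurrence from initial memory σ_Z Z_0 on inputs σ_X^1 X_1, …, σ_X^t X_t yields the state σ_Z Z_t at time t. -/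
import Mathlib


open Matrix
open scoped Matrix

/-- The row-wise map associated with `g`: it applies `g` to each row of its argument. -/
def rowwise {n d d' : ℕ} (g : (Fin d → ℝ) → Fin d' → ℝ)
    (M : Matrix (Fin n) (Fin d) ℝ) : Matrix (Fin n) (Fin d') ℝ :=
  Matrix.of fun i => g (M i)

/-- Row-wise softmax: `softmax(M)_{ij} = exp(M_{ij}) / Σ_l exp(M_{il})`. -/
noncomputable def softmaxRow {n m : ℕ} (M : Matrix (Fin n) (Fin m) ℝ) : Matrix (Fin n) (Fin m) ℝ :=
  Matrix.of fun i j => Real.exp (M i j) / ∑ l, Real.exp (M i l)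

/-- The attention router `R(Z, X) = softmax(φ(Z) ψ(X)ᵀ / √d') φ̃(X)`, where `φ, ψ, φ̃`
are the row-wise maps associated with `gφ, gψ, gφ'`. -/
noncomputable def router {k m d d' : ℕ} (gφ gψ : (Fin d → ℝ) → Fin d' → ℝ) (gφ' : (Fin d → ℝ) → Fin d → ℝ)
    (Z : Matrix (Fin k) (Fin d) ℝ) (X : Matrix (Fin m) (Fin d) ℝ) :
    Matrix (Fin k) (Fin d) ℝ :=
  softmaxRow ((Real.sqrt d')⁻¹ • (rowwise gφ Z * (rowwise gψ X)ᵀ)) * rowwise gφ' X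
/-- The concrete FACTS recurrence built from attention routers:
`Δ = R_Δ`, `Ā = exp(α Δ)` (entrywise), `B̄ = Δ ⊙ R_B`, `U = R_U`, with
`Z_s = Ā(Z_0, X_s) ⊙ Z_{s-1} + B̄(Z_0, X_s) ⊙ U(Z_0, X_s)` for `s ≥ 1`. -/
noncomputable def factsRouterState {k m d d' : ℕ} (α : ℝ)
    (gφΔ gψΔ : (Fin d → ℝ) → Fin d' → ℝ) (gφ'Δ : (Fin d → ℝ) → Fin d → ℝ)
    (gφB gψB : (Fin d → ℝ) → Fin d' → ℝ) (gφ'B : (Fin d → ℝ) → Fin d → ℝ)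
    (gφU gψU : (Fin d → ℝ) → Fin d' → ℝ) (gφ'U : (Fin d → ℝ) → Fin d → ℝ)
    (Z0 : Matrix (Fin k) (Fin d) ℝ) (X : ℕ → Matrix (Fin m) (Fin d) ℝ) :
    ℕ → Matrix (Fin k) (Fin d) ℝ
  | 0 => Z0
  | s + 1 =>
      ((router gφΔ gψΔ gφ'Δ Z0 (X (s + 1))).map fun x => Real.exp (α * x))
          ⊙ factsRouterState α gφΔ gψΔ gφ'Δ gφB gψB gφ'B gφU gψU gφ'U Z0 X s
        + (router gφΔ gψΔ gφ'Δ Z0 (X (s + 1)) ⊙ router gφB gψB gφ'B Z0 (X (s + 1)))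
          ⊙ router gφU gψU gφ'U Z0 (X (s + 1))

section Aux

lemma perm_mul_eq_submatrix {k n : ℕ} (σ : Equiv.Perm (Fin k)) (M : Matrix (Fin k) (Fin n) ℝ) :
    σ.permMatrix ℝ * M = M.submatrix σ id :=
  PEquiv.toMatrix_toPEquiv_mul σ M

lemma rowwise_submatrix {n d d' : ℕ} (g : (Fin d → ℝ) → Fin d' → ℝ) (σ : Equiv.Perm (Fin n))
    (M : Matrix (Fin n) (Fin d) ℝ) :
    rowwise g (M.submatrix σ id) = (rowwise g M).submatrix σ id := rfl

lemma softmax_row_submatrix {n m : ℕ} (σ : Equiv.Perm (Fin n)) (M : Matrix (Fin n) (Fin m) ℝ) :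
    softmaxRow (M.submatrix σ id) = (softmaxRow M).submatrix σ id := rfl

lemma softmax_col_submatrix {n m : ℕ} (τ : Equiv.Perm (Fin m)) (M : Matrix (Fin n) (Fin m) ℝ) :
    softmaxRow (M.submatrix id τ) = (softmaxRow M).submatrix id τ := by
  ext i j
  simp only [softmaxRow, Matrix.of_apply, Matrix.submatrix_apply, id]
  congr 1
  exact Fintype.sum_equiv τ _ _ (fun l => rfl)

lemma submatrix_col_mul_row {n m p : ℕ} (τ : Equiv.Perm (Fin m))
    (A : Matrix (Fin n) (Fin m) ℝ) (B : Matrix (Fin m) (Fin p) ℝ) :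
    A.submatrix id τ * B.submatrix τ id = A * B := by
  ext i j
  exact Fintype.sum_equiv τ _ _ (fun l => rfl)

lemma router_perm {k m d d' : ℕ} (gφ gψ : (Fin d → ℝ) → Fin d' → ℝ)
    (gφ' : (Fin d → ℝ) → Fin d → ℝ)
    (Z : Matrix (Fin k) (Fin d) ℝ) (X : Matrix (Fin m) (Fin d) ℝ)
    (σ : Equiv.Perm (Fin k)) (τ : Equiv.Perm (Fin m)) :
    router gφ gψ gφ' (σ.permMatrix ℝ * Z) (τ.permMatrix ℝ * X)
      = σ.permMatrix ℝ * router gφ gψ gφ' Z X := by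
  rw [perm_mul_eq_submatrix, perm_mul_eq_submatrix, perm_mul_eq_submatrix]
  unfold router
  rw [rowwise_submatrix, rowwise_submatrix, rowwise_submatrix]
  have h1 : ((rowwise gψ X).submatrix τ id)ᵀ = (rowwise gψ X)ᵀ.submatrix id τ := rfl
  rw [h1]
  have h2 : (rowwise gφ Z).submatrix σ id * (rowwise gψ X)ᵀ.submatrix id τ
      = (rowwise gφ Z * (rowwise gψ X)ᵀ).submatrix σ τ := by
    ext i j; simp [Matrix.mul_apply]
  rw [h2]
  have h3 : (Real.sqrt d')⁻¹ • (rowwise gφ Z * (rowwise gψ X)ᵀ).submatrix σ τ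
      = ((Real.sqrt d')⁻¹ • (rowwise gφ Z * (rowwise gψ X)ᵀ)).submatrix σ τ := rfl
  rw [h3]
  have h4 : (((Real.sqrt d')⁻¹ • (rowwise gφ Z * (rowwise gψ X)ᵀ)).submatrix σ τ)
      = ((((Real.sqrt d')⁻¹ • (rowwise gφ Z * (rowwise gψ X)ᵀ)).submatrix σ id).submatrix id τ) := rfl
  rw [h4, softmax_col_submatrix, softmax_row_submatrix]
  have h5 : ∀ (A : Matrix (Fin k) (Fin m) ℝ), (A.submatrix σ id).submatrix id τ = (A.submatrix id τ).submatrix σ id := fun A => rfl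
  have h6 : ((softmaxRow ((Real.sqrt d')⁻¹ • (rowwise gφ Z * (rowwise gψ X)ᵀ))).submatrix id τ).submatrix σ id
      = ((softmaxRow ((Real.sqrt d')⁻¹ • (rowwise gφ Z * (rowwise gψ X)ᵀ))).submatrix σ id).submatrix id τ := rfl
  rw [submatrix_col_mul_row]
  ext i j
  simp [Matrix.mul_apply]

lemma hadamard_submatrix {k n : ℕ} (σ : Equiv.Perm (Fin k)) (A B : Matrix (Fin k) (Fin n) ℝ) :
    A.submatrix σ id ⊙ B.submatrix σ id = (A ⊙ B).submatrix σ id := rfl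

lemma map_submatrix {k n : ℕ} (σ : Equiv.Perm (Fin k)) (A : Matrix (Fin k) (Fin n) ℝ)
    (f : ℝ → ℝ) : (A.submatrix σ id).map f = (A.map f).submatrix σ id := rfl

lemma add_submatrix {k n : ℕ} (σ : Equiv.Perm (Fin k)) (A B : Matrix (Fin k) (Fin n) ℝ) :
    A.submatrix σ id + B.submatrix σ id = (A + B).submatrix σ id := rfl

end Aux

theorem stmt_13 {k m d d' : ℕ} (hd' : 0 < d') (t : ℕ) (α : ℝ)
    (gφΔ gψΔ : (Fin d → ℝ) → Fin d' → ℝ) (gφ'Δ : (Fin d → ℝ) → Fin d → ℝ)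
    (gφB gψB : (Fin d → ℝ) → Fin d' → ℝ) (gφ'B : (Fin d → ℝ) → Fin d → ℝ)
    (gφU gψU : (Fin d → ℝ) → Fin d' → ℝ) (gφ'U : (Fin d → ℝ) → Fin d → ℝ)
    (Z0 : Matrix (Fin k) (Fin d) ℝ) (X : ℕ → Matrix (Fin m) (Fin d) ℝ)
    (σZ : Equiv.Perm (Fin k)) (σX : ℕ → Equiv.Perm (Fin m)) :
    factsRouterState α gφΔ gψΔ gφ'Δ gφB gψB gφ'B gφU gψU gφ'U
        (σZ.permMatrix ℝ * Z0) (fun s => (σX s).permMatrix ℝ * X s) t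
      = σZ.permMatrix ℝ
          * factsRouterState α gφΔ gψΔ gφ'Δ gφB gψB gφ'B gφU gψU gφ'U Z0 X t := by
  
  induction t with
  | zero => rfl
  | succ s ih =>
      show _ = _
      rw [factsRouterState, factsRouterState, ih]
      rw [router_perm, router_perm, router_perm, perm_mul_eq_submatrix,
        perm_mul_eq_submatrix, perm_mul_eq_submatrix, perm_mul_eq_submatrix,
        perm_mul_eq_submatrix, map_submatrix, hadamard_submatrix, hadamard_submatrix,
        hadamard_submatrix, add_submatrix]
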